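/- For the explicit potential F(r) = r^{-2} (ln r)^{-2} (ln ln r)^{-1} for r > e^{e²} and F(r) = 0 otherwise, the auxiliary potential satisfies G_F(t) = t^{-2}(ln t)^{-1} for t > e², and the sequence entries ẑ_k(G_F) = ∫_{e^{k-1}}^{e^k} |t| G_F(t) dt = ln(k/(k-1)) for all sufficiently large k; in particular ẑ_k(G_F) ~ 1/k, so ẑ(G_F) ∈ ℓ_{1,∞} but ẑ(G_F) ∉ ℓ°_{1,∞} (since limsup_k k·ẑ_k = 1 > 0). -/

import Mathlib

open Set Filter Topology MeasureTheory ENNReal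

/-- The explicit potential `F(r) = r^{-2} (ln r)^{-2} (ln ln r)^{-1}` for `r > e^{e²}`,
and `F(r) = 0` otherwise. -/
noncomputable def Fex (r : ℝ) : ℝ :=
  if Real.exp (Real.exp 2) < r then (r ^ 2 * Real.log r ^ 2 * Real.log (Real.log r))⁻¹ else 0

/-- The auxiliary one-dimensional potential `G_F(t) = e^{2|t|} F(e^t)`. -/
noncomputable def Gex (t : ℝ) : ℝ := Real.exp (2 * |t|) * Fex (Real.exp t)

/-- The sequence `ẑ(G)`: `ẑ_0(G) = ∫_{-1}^1 G(t) dt` and, for `k ≥ 1`,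
`ẑ_k(G) = ∫_{e^{k-1}<|t|<e^k} |t| G(t) dt`. -/
noncomputable def zhat (G : ℝ → ℝ) : ℕ → ℝ≥0∞
  | 0 => ∫⁻ t in Set.Ioo (-1 : ℝ) 1, ENNReal.ofReal (G t)
  | (k + 1) =>
    ∫⁻ t in {t : ℝ | Real.exp (k : ℝ) < |t| ∧ |t| < Real.exp ((k : ℝ) + 1)},
      ENNReal.ofReal (|t| * G t)


lemma Gex_of_gt {t : ℝ} (h : Real.exp 2 < t) : Gex t = (t ^ 2 * Real.log t)⁻¹ := by
  have ht0 : (0:ℝ) < t := lt_trans (Real.exp_pos 2) h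
  have h1 : Real.exp (Real.exp 2) < Real.exp t := Real.exp_lt_exp.2 h
  rw [Gex, Fex, if_pos h1, abs_of_pos ht0, Real.log_exp]
  have h2 : Real.exp t ^ 2 = Real.exp (2 * t) := by
    rw [← Real.exp_nat_mul]; norm_num
  have hlt : (0:ℝ) < Real.log t := Real.log_pos (by nlinarith [Real.exp_one_gt_d9, Real.exp_pos 2, Real.add_one_le_exp (2:ℝ)])
  rw [h2]
  field_simp

lemma Gex_of_le {t : ℝ} (h : t ≤ Real.exp 2) : Gex t = 0 := by
  rw [Gex, Fex, if_neg (by simpa using Real.exp_le_exp.2 h), mul_zero]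

lemma one_lt_e2 : (1:ℝ) < Real.exp 2 := by
  nlinarith [Real.add_one_le_exp (2:ℝ)]

lemma Smeas (a b : ℝ) : MeasurableSet {t : ℝ | a < |t| ∧ |t| < b} := by
  have : {t : ℝ | a < |t| ∧ |t| < b} = (fun t : ℝ => |t|) ⁻¹' Set.Ioo a b := rfl
  rw [this]; exact measurableSet_Ioo.preimage continuous_abs.measurable

lemma zhat_zero : zhat Gex 0 = 0 := by
  show (∫⁻ t in Set.Ioo (-1 : ℝ) 1, ENNReal.ofReal (Gex t)) = 0
  rw [setLIntegral_congr_fun measurableSet_Ioo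
    (fun t (ht : t ∈ Set.Ioo (-1:ℝ) 1) => by
      rw [Gex_of_le (le_of_lt (lt_trans ht.2 one_lt_e2)), ENNReal.ofReal_zero])]
  simp

lemma zhat_small (k : ℕ) (hk : k ≤ 1) : zhat Gex (k + 1) = 0 := by
  show (∫⁻ t in {t : ℝ | Real.exp (k : ℝ) < |t| ∧ |t| < Real.exp ((k : ℝ) + 1)},
      ENNReal.ofReal (|t| * Gex t)) = 0
  rw [setLIntegral_congr_fun (Smeas _ _)
    (fun t ht => by
      have h1 : (k:ℝ) + 1 ≤ 2 := by
        have : (k:ℝ) ≤ 1 := by exact_mod_cast hk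
        linarith
      have h2 : t ≤ Real.exp 2 :=
        le_of_lt (lt_of_le_of_lt (le_abs_self t) (lt_of_lt_of_le ht.2 (Real.exp_le_exp.2 h1)))
      rw [Gex_of_le h2, mul_zero, ENNReal.ofReal_zero])]
  simp

lemma zhat_eq (m : ℕ) (hm : 2 ≤ m) :
    zhat Gex (m + 1) = ENNReal.ofReal (Real.log (((m : ℝ) + 1) / m)) := by
  have hm0 : (0:ℝ) < m := Nat.cast_pos.2 (by omega)
  set a := Real.exp (m : ℝ) with ha
  set b := Real.exp ((m : ℝ) + 1) with hb
  have hea : Real.exp 2 ≤ a := Real.exp_le_exp.2 (by exact_mod_cast hm)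
  have hab : a < b := Real.exp_lt_exp.2 (by linarith)
  have ha1 : (1:ℝ) < a := lt_of_lt_of_le one_lt_e2 hea
  have key : ∀ t ∈ Set.Icc a b, 1 < t ∧ Real.log t ≠ 0 ∧ t * Real.log t ≠ 0 := by
    intro t ht
    have h1 : 1 < t := lt_of_lt_of_le ha1 ht.1
    have h2 : 0 < Real.log t := Real.log_pos h1
    exact ⟨h1, ne_of_gt h2, by positivity⟩
  show (∫⁻ t in {t : ℝ | a < |t| ∧ |t| < b}, ENNReal.ofReal (|t| * Gex t))
      = ENNReal.ofReal (Real.log (((m : ℝ) + 1) / m))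
  have hset : (∫⁻ t in {t : ℝ | a < |t| ∧ |t| < b}, ENNReal.ofReal (|t| * Gex t))
      = ∫⁻ t in Set.Ioo a b, ENNReal.ofReal (|t| * Gex t) := by
    rw [← lintegral_indicator (Smeas a b), ← lintegral_indicator measurableSet_Ioo]
    congr 1; funext t
    by_cases ht : t ∈ Set.Ioo a b
    · have ht0 : 0 < t := lt_trans (lt_trans zero_lt_one ha1) ht.1
      rw [Set.indicator_of_mem ht, Set.indicator_of_mem]
      exact ⟨by rw [abs_of_pos ht0]; exact ht.1, by rw [abs_of_pos ht0]; exact ht.2⟩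
    · rw [Set.indicator_of_notMem ht]
      by_cases hts : t ∈ {t : ℝ | a < |t| ∧ |t| < b}
      · have htneg : t < 0 := by
          rcases lt_or_ge t 0 with h | h
          · exact h
          · exact absurd ⟨by have := hts.1; rwa [abs_of_nonneg h] at this, by
              have := hts.2; rwa [abs_of_nonneg h] at this⟩ ht
        rw [Set.indicator_of_mem hts,
          Gex_of_le (le_of_lt (lt_trans htneg (lt_trans zero_lt_one one_lt_e2))),
          mul_zero, ENNReal.ofReal_zero]
      · rw [Set.indicator_of_notMem hts]
  rw [hset]
  have hcong : (∫⁻ t in Set.Ioo a b, ENNReal.ofReal (|t| * Gex t))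
      = ∫⁻ t in Set.Ioo a b, ENNReal.ofReal ((t * Real.log t)⁻¹) := by
    apply setLIntegral_congr_fun measurableSet_Ioo
    intro t ht
    have ht2 : Real.exp 2 < t := lt_of_le_of_lt hea ht.1
    have ht0 : 0 < t := lt_trans (Real.exp_pos 2) ht2
    have hlt : 0 < Real.log t := Real.log_pos (lt_trans one_lt_e2 ht2)
    beta_reduce
    rw [abs_of_pos ht0, Gex_of_gt ht2]
    congr 1
    field_simp
  rw [hcong]
  have hcont : ContinuousOn (fun t : ℝ => (t * Real.log t)⁻¹) (Set.Icc a b) := by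
    apply ContinuousOn.inv₀
    · exact continuousOn_id.mul (Real.continuousOn_log.mono (fun t ht => by
        simp only [Set.mem_compl_iff, Set.mem_singleton_iff]
        exact ne_of_gt (lt_trans zero_lt_one (key t ht).1)))
    · exact fun t ht => (key t ht).2.2
  have hint : IntegrableOn (fun t : ℝ => (t * Real.log t)⁻¹) (Set.Ioo a b) :=
    hcont.integrableOn_Icc.mono_set Set.Ioo_subset_Icc_self
  have hnn : 0 ≤ᵐ[volume.restrict (Set.Ioo a b)] fun t : ℝ => (t * Real.log t)⁻¹ := by
    rw [EventuallyLE, ae_restrict_iff' measurableSet_Ioo]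
    apply ae_of_all
    intro t ht
    have h1 := (key t (Set.Ioo_subset_Icc_self ht)).1
    have h2 : 0 < Real.log t := Real.log_pos h1
    positivity
  rw [← MeasureTheory.ofReal_integral_eq_lintegral_ofReal hint hnn]
  have h4 : (∫ t in Set.Ioo a b, (t * Real.log t)⁻¹) =
      Real.log (Real.log b) - Real.log (Real.log a) := by
    rw [← MeasureTheory.integral_Ioc_eq_integral_Ioo, ← intervalIntegral.integral_of_le hab.le]
    refine intervalIntegral.integral_eq_sub_of_hasDerivAt
      (f := fun t => Real.log (Real.log t)) ?_ ?_
    · intro t ht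
      rw [Set.uIcc_of_le hab.le] at ht
      obtain ⟨h1, h2, _⟩ := key t ht
      have ht0 : t ≠ 0 := ne_of_gt (lt_trans zero_lt_one h1)
      have := (Real.hasDerivAt_log h2).comp t (Real.hasDerivAt_log ht0)
      exact this.congr_deriv (by rw [mul_inv]; ring)
    · exact (hcont.mono (by rw [Set.uIcc_of_le hab.le])).intervalIntegrable
  rw [h4, ha, hb, Real.log_exp, Real.log_exp,
    Real.log_div (by positivity) (ne_of_gt hm0)]

lemma zhat_eq' (k : ℕ) (hk : 3 ≤ k) :
    zhat Gex k = ENNReal.ofReal (Real.log ((k : ℝ) / ((k : ℝ) - 1))) := by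
  obtain ⟨m, rfl⟩ : ∃ m, k = m + 1 := ⟨k - 1, by omega⟩
  rw [zhat_eq m (by omega)]
  congr 2 <;> push_cast <;> ring

lemma log_ratio_le {m : ℝ} (hm : 1 ≤ m) : Real.log ((m + 1) / m) ≤ 1 / m := by
  have h := Real.log_le_sub_one_of_pos (show (0:ℝ) < (m + 1) / m by positivity)
  have h2 : (m + 1) / m - 1 = 1 / m := by field_simp; ring
  linarith

lemma log_ratio_ge {m : ℝ} (hm : 1 ≤ m) : 1 / (m + 1) ≤ Real.log ((m + 1) / m) := by
  have h := Real.log_le_sub_one_of_pos (show (0:ℝ) < m / (m + 1) by positivity)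
  have h1 : Real.log (m / (m + 1)) = -Real.log ((m + 1) / m) := by
    rw [← Real.log_inv, inv_div]
  have h2 : m / (m + 1) - 1 = -(1 / (m + 1)) := by field_simp; ring
  linarith

lemma zhat_verysmall (k : ℕ) (hk : k ≤ 2) : zhat Gex k = 0 := by
  interval_cases k
  · exact zhat_zero
  · exact zhat_small 0 (by omega)
  · exact zhat_small 1 (by omega)

lemma mem_bound {ε : ℝ} (hε : 0 < ε) {k : ℕ}
    (hk : ENNReal.ofReal ε < zhat Gex k) : 3 ≤ k ∧ ε < 1 / ((k : ℝ) - 1) := by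
  by_cases h3 : 3 ≤ k
  · refine ⟨h3, ?_⟩
    rw [zhat_eq' k h3, ENNReal.ofReal_lt_ofReal_iff_of_nonneg hε.le] at hk
    have hm : (1:ℝ) ≤ (k : ℝ) - 1 := by
      have : (3:ℝ) ≤ (k:ℝ) := by exact_mod_cast h3
      linarith
    have := log_ratio_le hm
    have hrw : ((k:ℝ) - 1) + 1 = (k:ℝ) := by ring
    rw [hrw] at this
    linarith
  · rw [zhat_verysmall k (by omega)] at hk
    exact absurd hk (by simp)

lemma lower_bound_mem {ε : ℝ} (hε : 0 < ε) {k : ℕ} (h3 : 3 ≤ k) (hk : (k : ℝ) < 1 / ε) :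
    ENNReal.ofReal ε < zhat Gex k := by
  rw [zhat_eq' k h3]
  have hk0 : (0:ℝ) < k := by exact_mod_cast (by omega : 0 < k)
  have hεk : ε < 1 / k := by
    rw [lt_div_iff₀ hk0]
    rw [lt_div_iff₀ hε] at hk
    linarith
  have hm : (1:ℝ) ≤ (k : ℝ) - 1 := by
    have : (3:ℝ) ≤ (k:ℝ) := by exact_mod_cast h3
    linarith
  have hge := log_ratio_ge hm
  have hrw : ((k:ℝ) - 1) + 1 = (k:ℝ) := by ring
  rw [hrw] at hge
  rw [ENNReal.ofReal_lt_ofReal_iff (by linarith [hεk, (by positivity : (0:ℝ) < 1 / (k:ℝ))])]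
  linarith

lemma real_lim : Tendsto (fun k : ℕ => (k : ℝ) * Real.log ((k : ℝ) / ((k : ℝ) - 1)))
    atTop (nhds 1) := by
  rw [← Filter.tendsto_add_atTop_iff_nat 1]
  have h1 : Tendsto (fun x : ℝ => x * Real.log (1 + 1 / x)) atTop (nhds 1) := by
    simpa using Real.tendsto_mul_log_one_add_div_atTop 1
  have h2 : Tendsto (fun m : ℕ => (m : ℝ) * Real.log (1 + 1 / m)) atTop (nhds 1) :=
    h1.comp tendsto_natCast_atTop_atTop
  have h3 : Tendsto (fun m : ℕ => Real.log (1 + 1 / (m : ℝ))) atTop (nhds 0) := by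
    have : Tendsto (fun m : ℕ => 1 + 1 / (m : ℝ)) atTop (nhds 1) := by
      simpa using (tendsto_const_nhds (x := (1:ℝ))).add tendsto_one_div_atTop_nhds_zero_nat
    simpa [Real.log_one, Function.comp_def] using ((Real.continuousAt_log one_ne_zero).tendsto.comp this)
  have h4 := h2.add h3
  rw [add_zero] at h4
  apply h4.congr'
  filter_upwards [eventually_ge_atTop 1] with m hm
  have hm0 : (0:ℝ) < m := by exact_mod_cast hm
  have hrw : ((m:ℝ) + 1) / ((m:ℝ) + 1 - 1) = 1 + 1 / m := by field_simp; rw [add_sub_cancel_right, div_self hm0.ne']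
  push_cast
  rw [hrw]
  ring

lemma limsup_part :
    Filter.limsup (fun k : ℕ => (k : ℝ≥0∞) * zhat Gex k) atTop = 1 := by
  have hT : Tendsto (fun k : ℕ => (k : ℝ≥0∞) * zhat Gex k) atTop (nhds 1) := by
    have heq : ∀ᶠ k : ℕ in atTop, (k : ℝ≥0∞) * zhat Gex k
        = ENNReal.ofReal ((k : ℝ) * Real.log ((k : ℝ) / ((k : ℝ) - 1))) := by
      filter_upwards [eventually_ge_atTop 3] with k hk
      rw [zhat_eq' k hk, ← ENNReal.ofReal_natCast k,
        ← ENNReal.ofReal_mul (by positivity)]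
    rw [tendsto_congr' heq]
    have := (ENNReal.continuous_ofReal.tendsto 1).comp real_lim
    rw [ENNReal.ofReal_one] at this; exact this
  exact hT.limsup_eq

lemma half_le {ε : ℝ} (hε : 0 < ε) (hε8 : ε ≤ 1 / 8) :
    (1 : ℝ≥0∞) / 2 ≤ ENNReal.ofReal ε *
      ({k : ℕ | ENNReal.ofReal ε < zhat Gex k}.encard : ℝ≥0∞) := by
  set M := ⌊1 / ε⌋₊ with hM
  have h8 : (8:ℝ) ≤ 1 / ε := by
    rw [le_div_iff₀ hε]; linarith
  have hM8 : 8 ≤ M := Nat.le_floor (by exact_mod_cast h8)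
  have hsub : ↑(Finset.Ico 3 M) ⊆ {k : ℕ | ENNReal.ofReal ε < zhat Gex k} := by
    intro k hk
    simp only [Finset.coe_Ico, Set.mem_Ico] at hk
    refine lower_bound_mem hε hk.1 ?_
    calc (k:ℝ) < M := by exact_mod_cast hk.2
    _ ≤ 1 / ε := Nat.floor_le (by positivity)
  have hcard : ((M - 3 : ℕ) : ℝ≥0∞) ≤
      ({k : ℕ | ENNReal.ofReal ε < zhat Gex k}.encard : ℝ≥0∞) := by
    have := Set.encard_le_encard hsub
    rw [Set.encard_coe_eq_coe_finsetCard, Nat.card_Ico] at this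
    exact_mod_cast ENat.toENNReal_mono this
  calc (1 : ℝ≥0∞) / 2 ≤ ENNReal.ofReal (ε * ((M - 3 : ℕ) : ℝ)) := by
        have hcast : ((M - 3 : ℕ) : ℝ) = (M : ℝ) - 3 := by
          rw [Nat.cast_sub (by omega)]; norm_num
        have hMge : 1 / ε - 1 ≤ (M : ℝ) := by
          have := Nat.lt_floor_add_one (1 / ε)
          linarith
        have : (1:ℝ) / 2 ≤ ε * ((M : ℝ) - 3) := by
          have h1 : ε * (1 / ε - 4) ≤ ε * ((M : ℝ) - 3) := by
            apply mul_le_mul_of_nonneg_left (by linarith) hε.le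
          have h2 : ε * (1 / ε - 4) = 1 - 4 * ε := by field_simp
          linarith
        rw [hcast]
        calc (1 : ℝ≥0∞) / 2 = ENNReal.ofReal (1 / 2) := by
              rw [ENNReal.ofReal_div_of_pos (by norm_num)]; norm_num
        _ ≤ _ := ENNReal.ofReal_le_ofReal this
  _ ≤ ENNReal.ofReal ε * (((M - 3 : ℕ) : ℝ≥0∞)) := by
        rw [← ENNReal.ofReal_natCast (M - 3), ← ENNReal.ofReal_mul hε.le]
  _ ≤ _ := mul_le_mul_right hcard _


/-- For the explicit potential `Fex`: `G_F(t) = t^{-2} (ln t)^{-1}` for `t > e²`;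
`ẑ_k(G_F) = ln(k/(k-1))` for all large `k`; `ẑ_k ~ 1/k`, i.e. `limsup_k k·ẑ_k = 1 > 0`;
hence `ẑ(G_F) ∈ ℓ_{1,∞}` (the weak-ℓ1 distribution functional is finite) but
`ẑ(G_F) ∉ ℓ°_{1,∞}` (it does not tend to `0`). -/
theorem explicit_potential_weakL1_not_circ :
    (∀ t : ℝ, Real.exp 2 < t → Gex t = (t ^ 2 * Real.log t)⁻¹) ∧
      (∃ K : ℕ, ∀ k : ℕ, K ≤ k →
        zhat Gex k = ENNReal.ofReal (Real.log ((k : ℝ) / ((k : ℝ) - 1)))) ∧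
      Filter.limsup (fun k : ℕ => (k : ℝ≥0∞) * zhat Gex k) atTop = 1 ∧
      (⨆ ε : {ε : ℝ // 0 < ε}, ENNReal.ofReal ε.1 *
          ({k : ℕ | ENNReal.ofReal ε.1 < zhat Gex k}.encard : ℝ≥0∞)) < ⊤ ∧
      ¬ Tendsto (fun ε : ℝ => ENNReal.ofReal ε *
            ({k : ℕ | ENNReal.ofReal ε < zhat Gex k}.encard : ℝ≥0∞))
          (nhdsWithin 0 (Set.Ioi 0)) (nhds 0) := by
  refine ⟨fun t ht => Gex_of_gt ht, ⟨3, fun k hk => zhat_eq' k hk⟩, limsup_part, ?_, ?_⟩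
  · refine lt_of_le_of_lt (iSup_le ?_) (show (2:ℝ≥0∞) < ⊤ from ENNReal.ofNat_lt_top)
    rintro ⟨ε, hε⟩
    simp only
    by_cases h : 1 / 2 ≤ ε
    · have hS : {k : ℕ | ENNReal.ofReal ε < zhat Gex k} = ∅ := by
        ext k
        simp only [Set.mem_setOf_eq, Set.mem_empty_iff_false, iff_false]
        intro hk
        obtain ⟨h3, hlt⟩ := mem_bound hε hk
        have hk2 : (2:ℝ) ≤ (k:ℝ) - 1 := by
          have : (3:ℝ) ≤ (k:ℝ) := by exact_mod_cast h3
          linarith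
        have : 1 / ((k:ℝ) - 1) ≤ 1 / 2 := by
          apply one_div_le_one_div_of_le (by norm_num) hk2
        linarith
      rw [hS]
      simp
    · push_neg at h
      have hsub : {k : ℕ | ENNReal.ofReal ε < zhat Gex k}
          ⊆ ↑(Finset.range (⌊1/ε⌋₊ + 2)) := by
        intro k hk
        obtain ⟨h3, hlt⟩ := mem_bound hε hk
        simp only [Finset.coe_range, Set.mem_Iio]
        have hk1pos : (0:ℝ) < (k:ℝ) - 1 := by
          have : (3:ℝ) ≤ (k:ℝ) := by exact_mod_cast h3
          linarith
        have hlt2 : (k:ℝ) - 1 < 1 / ε := by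
          rw [lt_div_iff₀ hk1pos] at hlt
          rw [lt_div_iff₀ hε]
          linarith
        have hcast : ((k - 1 : ℕ) : ℝ) ≤ 1 / ε := by
          rw [Nat.cast_sub (by omega)]
          push_cast
          linarith
        have := Nat.le_floor hcast
        omega
      have hcard : ({k : ℕ | ENNReal.ofReal ε < zhat Gex k}.encard : ℝ≥0∞)
          ≤ ((⌊1/ε⌋₊ + 2 : ℕ) : ℝ≥0∞) := by
        have := Set.encard_le_encard hsub
        rw [Set.encard_coe_eq_coe_finsetCard, Finset.card_range] at this
        exact_mod_cast ENat.toENNReal_mono this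
      calc ENNReal.ofReal ε * ({k : ℕ | ENNReal.ofReal ε < zhat Gex k}.encard : ℝ≥0∞)
          ≤ ENNReal.ofReal ε * ((⌊1/ε⌋₊ + 2 : ℕ) : ℝ≥0∞) := mul_le_mul_right hcard _
        _ = ENNReal.ofReal (ε * ((⌊1/ε⌋₊ + 2 : ℕ) : ℝ)) := by
            rw [← ENNReal.ofReal_natCast, ← ENNReal.ofReal_mul hε.le]
        _ ≤ ENNReal.ofReal 2 := by
            apply ENNReal.ofReal_le_ofReal
            have hfl : (⌊1/ε⌋₊ : ℝ) ≤ 1 / ε := Nat.floor_le (by positivity)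
            have h1 : ε * ((⌊1/ε⌋₊ + 2 : ℕ) : ℝ) ≤ ε * (1 / ε + 2) := by
              apply mul_le_mul_of_nonneg_left (by push_cast; linarith) hε.le
            have h2 : ε * (1 / ε + 2) = 1 + 2 * ε := by field_simp
            linarith
        _ ≤ 2 := by simp [ENNReal.ofReal_ofNat]
  · intro h
    have h2 : ∀ᶠ ε in nhdsWithin (0:ℝ) (Set.Ioi 0),
        ENNReal.ofReal ε * ({k : ℕ | ENNReal.ofReal ε < zhat Gex k}.encard : ℝ≥0∞)
          < 1 / 2 := h.eventually_lt_const (by norm_num)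
    rw [Filter.eventually_iff] at h2
    obtain ⟨u, hu, hsub⟩ := mem_nhdsGT_iff_exists_Ioo_subset.1 h2
    set ε := min (u / 2) (1 / 8 : ℝ) with hε
    have hu0 : (0:ℝ) < u := hu
    have hε0 : 0 < ε := lt_min (by linarith) (by norm_num)
    have hεu : ε < u := lt_of_le_of_lt (min_le_left _ _) (by linarith)
    have hε8 : ε ≤ 1 / 8 := min_le_right _ _
    have hmem : ε ∈ Set.Ioo (0:ℝ) u := ⟨hε0, hεu⟩
    have hlt := hsub hmem
    exact absurd hlt (not_lt.2 (half_le hε0 hε8))
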